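/- Let P be the unique solution of the P-system associated with (ρ, r, Q). Then P(t,i) ≥ exp(−∫_t^T (ρ(s,i) − 2r(s,i) − q_{ii}) ds) > 0 for all t ∈ [0,T] and all i = 1,…,m. If moreover ρ(t,i) ≥ 0 for all (t,i), then P(t,i) ≤ exp(2R(T−t)) for all t ∈ [0,T] and all i, where R = sup_{t,i} |r(t,i)|; in particular 0 < P(t,i) ≤ e^{2RT}, a bound that does not depend on the generator Q. -/

import Mathlib

open MeasureTheory Filter
open scoped BigOperators Topology

/-- `Q` is the generator matrix of a continuous-time Markov chain:
off-diagonal entries are nonnegative and each row sums to zero. -/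
def IsGenerator {S : Type*} [Fintype S] (Q : Matrix S S ℝ) : Prop :=
  (∀ i j, i ≠ j → 0 ≤ Q i j) ∧ ∀ i, ∑ j, Q i j = 0

/-- `f : [0,T] × S → ℝ` is bounded and measurable (in time, for each state). -/
def BddMeasOn {S : Type*} [Fintype S] (T : ℝ) (f : ℝ → S → ℝ) : Prop :=
  (∀ i, Measurable fun t => f t i) ∧
    ∃ C : ℝ, ∀ t ∈ Set.Icc (0:ℝ) T, ∀ i, |f t i| ≤ C

/-- `P` is a solution of the P-system associated with `(ρ, r, Q)` on `[0,T]`: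
`P` is continuous on `[0,T]` and
`P(t,i) = 1 - ∫_t^T [P(s,i)(ρ(s,i) - 2 r(s,i)) - Σ_j q_{ij} P(s,j)] ds`. -/
def IsPSol {S : Type*} [Fintype S] (T : ℝ) (Q : Matrix S S ℝ)
    (ρ r : ℝ → S → ℝ) (P : ℝ → S → ℝ) : Prop :=
  (∀ i, ContinuousOn (fun t => P t i) (Set.Icc 0 T)) ∧
    ∀ t ∈ Set.Icc (0:ℝ) T, ∀ i,
      P t i = 1 - ∫ s in t..T, (P s i * (ρ s i - 2 * r s i) - ∑ j, Q i j * P s j)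

/-- `H` is a solution of the H-system associated with `(r, Q, P)` on `[0,T]`:
`H` is continuous on `[0,T]` and
`H(t,i) = 1 - ∫_t^T [H(s,i) r(s,i) - (1/P(s,i)) Σ_j q_{ij} P(s,j) H(s,j)
  + (H(s,i)/P(s,i)) Σ_j q_{ij} P(s,j)] ds`. -/
def IsHSol {S : Type*} [Fintype S] (T : ℝ) (Q : Matrix S S ℝ)
    (r : ℝ → S → ℝ) (P : ℝ → S → ℝ) (H : ℝ → S → ℝ) : Prop :=
  (∀ i, ContinuousOn (fun t => H t i) (Set.Icc 0 T)) ∧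
    ∀ t ∈ Set.Icc (0:ℝ) T, ∀ i,
      H t i = 1 - ∫ s in t..T,
        (H s i * r s i - (1 / P s i) * ∑ j, Q i j * P s j * H s j
          + (H s i / P s i) * ∑ j, Q i j * P s j)

/-- `sup_{t ∈ [0,T], i} |r(t,i)|`. -/
noncomputable def supAbsOn {S : Type*} [Fintype S] (T : ℝ) (r : ℝ → S → ℝ) : ℝ :=
  sSup {x : ℝ | ∃ t ∈ Set.Icc (0:ℝ) T, ∃ i : S, x = |r t i|}

/-- the solution of the P-system satisfies
`P(t,i) ≥ exp(−∫_t^T (ρ(s,i) − 2r(s,i) − q_{ii}) ds) > 0`, and if `ρ ≥ 0` then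
`P(t,i) ≤ exp(2R(T−t))` with `R = sup_{t,i} |r(t,i)|`; in particular
`0 < P(t,i) ≤ exp(2RT)`. -/
lemma aux_backward_induction {T Δ : ℝ} (hΔ : 0 < Δ) {g : ℝ → Prop} (hgT : g T)
    (step : ∀ t t₂ : ℝ, t ∈ Set.Icc 0 T → t₂ ∈ Set.Icc 0 T → t ≤ t₂ → t₂ - t ≤ Δ →
      g t₂ → g t) :
    ∀ t ∈ Set.Icc 0 T, g t := by
  have key : ∀ n : ℕ, ∀ t ∈ Set.Icc 0 T, T - n * Δ ≤ t → g t := by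
    intro n
    induction n with
    | zero =>
      intro t ht h
      simp only [Nat.cast_zero, zero_mul, sub_zero] at h
      have : t = T := le_antisymm ht.2 h
      rwa [this]
    | succ n ih =>
      intro t ht h
      by_cases hc : T - n * Δ ≤ t
      · exact ih t ht hc
      · push_neg at hc
        have hnΔ : (0:ℝ) ≤ n * Δ := by positivity
        have ht₂ : T - n * Δ ∈ Set.Icc 0 T := ⟨by linarith [ht.1], by linarith⟩
        refine step t _ ht ht₂ hc.le ?_ (ih _ ht₂ le_rfl)
        push_cast at h
        linarith
  intro t ht
  obtain ⟨n, hn⟩ := exists_nat_ge ((T - t) / Δ)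
  refine key n t ht ?_
  rw [div_le_iff₀ hΔ] at hn
  linarith

lemma aux_exp_neg_le {x : ℝ} (hx : |x| ≤ 1) : Real.exp (-x) ≤ 1 - x + x ^ 2 := by
  have h := Real.abs_exp_sub_one_sub_id_le (x := -x) (by rwa [abs_neg])
  rw [abs_le] at h
  nlinarith [h.2]


lemma aux_parta_ineq {w K Ca δ A W d : ℝ} (hK : K = Ca + 1) (hWA : W ≤ A)
    (hwW : w ≤ W) (hW2 : W ≤ 1/2) (hw : 0 ≤ w) (hd : 0 ≤ d) (hCad : Ca * d ≤ 1)
    (hKd : K^2 * d ≤ w/2) (hδCa : δ * Ca ≤ w/4) (hδ : 0 ≤ δ) (hCa : 0 ≤ Ca) :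
    W * (1 - K * d + (K * d)^2) ≤ A - d * ((A + δ) * Ca) := by
  subst hK
  nlinarith [mul_nonneg (sub_nonneg.mpr hWA) (sub_nonneg.mpr hCad),
    mul_le_mul hW2 (mul_le_mul_of_nonneg_right hKd hd)
      (mul_nonneg (mul_nonneg (by nlinarith [sq_nonneg (Ca+1)]) hd) hd) (by norm_num),
    mul_le_mul_of_nonneg_right hδCa hd,
    mul_le_mul_of_nonneg_right hwW hd,
    mul_nonneg hw hd]


lemma aux_partb_ineq {wb WB Ca ε δ A W X d : ℝ} (hWA : W ≤ A) (hwb : wb ≤ W) (hWB : W ≤ WB)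
    (hwbpos : 0 < wb) (hε : 0 < ε) (hd : 0 ≤ d) (hXl : -(Ca*d) ≤ X) (hXu : X ≤ Ca*d)
    (hCa : 0 ≤ Ca) (hCad : (Ca+ε)*d ≤ 1) (hsq : WB*((Ca+ε)^2*d) ≤ wb*ε/2)
    (hδCa : δ*Ca ≤ wb*ε/2) (hδ : 0 ≤ δ) :
    W * (1 - (X + ε*d) + (X + ε*d)^2) ≤ A - A*X - d*(δ*Ca) := by
  have hεd : 0 ≤ ε*d := mul_nonneg hε.le hd
  have h1X : 0 ≤ 1 - X := by nlinarith
  have hWB0 : 0 ≤ WB := by linarith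
  have hx2 : (X + ε*d)^2 ≤ ((Ca+ε)*d)^2 := sq_le_sq' (by nlinarith) (by nlinarith)
  have F1 : 0 ≤ (A - W) * (1 - X) := mul_nonneg (by linarith) h1X
  have G1 : W*(X + ε*d)^2 ≤ WB*((Ca+ε)*d)^2 :=
    mul_le_mul hWB hx2 (sq_nonneg _) hWB0
  have G2 : WB*((Ca+ε)^2*d)*d ≤ wb*ε/2*d := mul_le_mul_of_nonneg_right hsq hd
  have G3 : δ*Ca*d ≤ wb*ε/2*d := mul_le_mul_of_nonneg_right hδCa hd
  have G4 : wb*ε*d ≤ W*ε*d :=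
    mul_le_mul_of_nonneg_right (mul_le_mul_of_nonneg_right hwb hε.le) hd
  nlinarith [F1, G1, G2, G3, G4]


lemma aux_partc_ineq {R ε δ CQ A V d : ℝ} (hAV : A ≤ V) (hV1 : 1 ≤ V) (hd : 0 ≤ d)
    (hR : 0 ≤ R) (hδ : 0 ≤ δ) (hCQ : 0 ≤ CQ) (hδb : δ*(2*R + 2*CQ) ≤ ε) :
    A + d*(2*R*(A + δ) + 2*δ*CQ) ≤ V * (1 + (2*R+ε)*d) := by
  have hε' : 0 ≤ ε := le_trans (mul_nonneg hδ (by linarith)) hδb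
  have hεd : 0 ≤ ε * d := mul_nonneg hε' hd
  nlinarith [mul_nonneg (sub_nonneg.mpr hAV) (by nlinarith : (0:ℝ) ≤ 1 + 2*R*d),
    mul_le_mul_of_nonneg_right hδb hd,
    mul_le_mul_of_nonneg_right hV1 hεd]

set_option maxHeartbeats 1000000 in
theorem p_system_bounds (m : ℕ) (hm : 1 ≤ m) (T : ℝ) (hT : 0 < T)
    (Q : Matrix (Fin m) (Fin m) ℝ) (hQ : IsGenerator Q)
    (ρ r : ℝ → Fin m → ℝ) (hρ : BddMeasOn T ρ) (hr : BddMeasOn T r)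
    (P : ℝ → Fin m → ℝ) (hP : IsPSol T Q ρ r P) :
    (∀ t ∈ Set.Icc (0:ℝ) T, ∀ i,
        Real.exp (-∫ s in t..T, (ρ s i - 2 * r s i - Q i i)) ≤ P t i ∧
        0 < Real.exp (-∫ s in t..T, (ρ s i - 2 * r s i - Q i i))) ∧
    ((∀ t ∈ Set.Icc (0:ℝ) T, ∀ i, 0 ≤ ρ t i) →
      ∀ t ∈ Set.Icc (0:ℝ) T, ∀ i,
        P t i ≤ Real.exp (2 * supAbsOn T r * (T - t)) ∧
        0 < P t i ∧ P t i ≤ Real.exp (2 * supAbsOn T r * T)) := by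
  classical
  obtain ⟨hQoff, hQrow⟩ := hQ
  obtain ⟨hPc, hPeq⟩ := hP
  obtain ⟨hρm, Cρ, hCρ⟩ := hρ
  obtain ⟨hrm, Cr, hCr⟩ := hr
  have i₀ : Fin m := ⟨0, hm⟩
  have hne : (Finset.univ : Finset (Fin m)).Nonempty := ⟨i₀, Finset.mem_univ _⟩
  have h0S : (0:ℝ) ∈ Set.Icc (0:ℝ) T := ⟨le_rfl, hT.le⟩
  have hTS : T ∈ Set.Icc (0:ℝ) T := ⟨hT.le, le_rfl⟩
  have hPT : ∀ i, P T i = 1 := by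
    intro i
    rw [hPeq T hTS i, intervalIntegral.integral_same]
    ring
  obtain ⟨M, hM0, hM⟩ : ∃ M, 0 ≤ M ∧ ∀ t ∈ Set.Icc (0:ℝ) T, ∀ i, |P t i| ≤ M := by
    have h : ∀ i : Fin m, ∃ Mi, ∀ t ∈ Set.Icc (0:ℝ) T, ‖P t i‖ ≤ Mi := fun i =>
      isCompact_Icc.exists_bound_of_continuousOn (hPc i)
    choose Mi hMi using h
    refine ⟨max 0 (Finset.univ.sup' hne Mi), le_max_left _ _, fun t ht i => ?_⟩
    exact le_trans (hMi i t ht) (le_max_of_le_right (Finset.le_sup' Mi (Finset.mem_univ i)))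
  have hCρ0 : 0 ≤ Cρ := le_trans (abs_nonneg _) (hCρ 0 h0S i₀)
  have hCr0 : 0 ≤ Cr := le_trans (abs_nonneg _) (hCr 0 h0S i₀)
  have hQerase : ∀ i, ∑ j ∈ Finset.univ.erase i, Q i j = -Q i i := by
    intro i
    have h2 : ∑ j ∈ Finset.univ.erase i, Q i j + Q i i = ∑ j, Q i j :=
      Finset.sum_erase_add _ _ (Finset.mem_univ i)
    have := hQrow i
    linarith
  have hQdiag : ∀ i, Q i i ≤ 0 := by
    intro i
    have h := hQerase i
    have h2 : 0 ≤ ∑ j ∈ Finset.univ.erase i, Q i j :=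
      Finset.sum_nonneg fun j hj => hQoff i j (Ne.symm (Finset.mem_erase.mp hj).1)
    linarith
  obtain ⟨CQ, hCQ0, hCQ⟩ : ∃ CQ : ℝ, 0 ≤ CQ ∧ ∀ i, -Q i i ≤ CQ := by
    refine ⟨Finset.univ.sup' hne (fun i => -Q i i), ?_, ?_⟩
    · exact le_trans (by linarith [hQdiag i₀])
        (Finset.le_sup' (f := fun i => -Q i i) (Finset.mem_univ i₀))
    · exact fun i => Finset.le_sup' (f := fun i => -Q i i) (Finset.mem_univ i)
  obtain ⟨Ca, hCa0, hCaQ⟩ : ∃ Ca : ℝ, 0 ≤ Ca ∧ Ca = Cρ + 2 * Cr + CQ :=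
    ⟨Cρ + 2 * Cr + CQ, by linarith, rfl⟩
  have ha_bd : ∀ s ∈ Set.Icc (0:ℝ) T, ∀ i, |ρ s i - 2 * r s i - Q i i| ≤ Ca := by
    intro s hs i
    have h4 := abs_le.mp (hCρ s hs i)
    have h5 := abs_le.mp (hCr s hs i)
    have h3 := hCQ i
    have h6 := hQdiag i
    rw [abs_le]
    constructor <;> [linarith; linarith]
  -- measurability / integrability
  have hPam : ∀ j, AEStronglyMeasurable (fun s => P s j)
      (volume.restrict (Set.Icc (0:ℝ) T)) :=
    fun j => (hPc j).aestronglyMeasurable measurableSet_Icc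
  have hfm : ∀ i, AEStronglyMeasurable
      (fun s => P s i * (ρ s i - 2 * r s i) - ∑ j, Q i j * P s j)
      (volume.restrict (Set.Icc (0:ℝ) T)) := by
    intro i
    apply AEStronglyMeasurable.sub
    · exact (hPam i).mul
        (((hρm i).sub ((hrm i).const_mul 2)).aestronglyMeasurable)
    · exact Finset.aestronglyMeasurable_fun_sum _ (fun j _ => (hPam j).const_mul _)
  have hfInt : ∀ i, MeasureTheory.IntegrableOn
      (fun s => P s i * (ρ s i - 2 * r s i) - ∑ j, Q i j * P s j)
      (Set.Icc (0:ℝ) T) := by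
    intro i
    apply MeasureTheory.Integrable.mono'
      (integrable_const (M * (Cρ + 2 * Cr) + (∑ j, |Q i j|) * M)) (hfm i)
    filter_upwards [MeasureTheory.ae_restrict_mem measurableSet_Icc] with s hs
    have h1 := hM s hs i
    have hsum : |∑ j, Q i j * P s j| ≤ (∑ j, |Q i j|) * M := by
      calc |∑ j, Q i j * P s j| ≤ ∑ j, |Q i j * P s j| := Finset.abs_sum_le_sum_abs _ _
        _ ≤ ∑ j, |Q i j| * M := Finset.sum_le_sum fun j _ => by
            rw [abs_mul]
            exact mul_le_mul_of_nonneg_left (hM s hs j) (abs_nonneg _)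
        _ = (∑ j, |Q i j|) * M := by rw [Finset.sum_mul]
    have habs : |P s i * (ρ s i - 2 * r s i)| ≤ M * (Cρ + 2 * Cr) := by
      rw [abs_mul]
      have h7 : |ρ s i - 2 * r s i| ≤ Cρ + 2 * Cr := by
        have h4 := abs_le.mp (hCρ s hs i)
        have h5 := abs_le.mp (hCr s hs i)
        rw [abs_le]; constructor <;> [linarith; linarith]
      exact mul_le_mul h1 h7 (abs_nonneg _) hM0
    show ‖_‖ ≤ _
    rw [Real.norm_eq_abs, sub_eq_add_neg]
    exact le_trans (abs_add_le _ _) (by rw [abs_neg]; exact add_le_add habs hsum)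
  have haInt : ∀ i, MeasureTheory.IntegrableOn
      (fun s => ρ s i - 2 * r s i - Q i i) (Set.Icc (0:ℝ) T) := by
    intro i
    apply MeasureTheory.Integrable.mono' (integrable_const Ca)
    · exact (((hρm i).sub ((hrm i).const_mul 2)).sub measurable_const).aestronglyMeasurable
    · filter_upwards [MeasureTheory.ae_restrict_mem measurableSet_Icc] with s hs
      exact ha_bd s hs i
  have hfII : ∀ t ∈ Set.Icc (0:ℝ) T, ∀ t₂ ∈ Set.Icc (0:ℝ) T, ∀ i,
      IntervalIntegrable (fun s => P s i * (ρ s i - 2 * r s i) - ∑ j, Q i j * P s j)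
        volume t t₂ :=
    fun t ht t₂ ht₂ i => ((hfInt i).mono_set (Set.uIcc_subset_Icc ht ht₂)).intervalIntegrable
  have haII : ∀ t ∈ Set.Icc (0:ℝ) T, ∀ t₂ ∈ Set.Icc (0:ℝ) T, ∀ i,
      IntervalIntegrable (fun s => ρ s i - 2 * r s i - Q i i) volume t t₂ :=
    fun t ht t₂ ht₂ i => ((haInt i).mono_set (Set.uIcc_subset_Icc ht ht₂)).intervalIntegrable
  have hsplit : ∀ t ∈ Set.Icc (0:ℝ) T, ∀ t₂ ∈ Set.Icc (0:ℝ) T, ∀ i,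
      P t i = P t₂ i -
        ∫ s in t..t₂, (P s i * (ρ s i - 2 * r s i) - ∑ j, Q i j * P s j) := by
    intro t ht t₂ ht₂ i
    have hadj := intervalIntegral.integral_add_adjacent_intervals
      (hfII t ht t₂ ht₂ i) (hfII t₂ ht₂ T hTS i)
    rw [hPeq t ht i, hPeq t₂ ht₂ i]
    linarith
  have hUC : ∀ δ : ℝ, 0 < δ → ∃ Δ, 0 < Δ ∧ ∀ t ∈ Set.Icc (0:ℝ) T, ∀ t₂ ∈ Set.Icc (0:ℝ) T,
      |t - t₂| ≤ Δ → ∀ i, |P t i - P t₂ i| ≤ δ := by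
    intro δ hδ
    have h : ∀ i : Fin m, ∃ Δ, 0 < Δ ∧ ∀ t ∈ Set.Icc (0:ℝ) T, ∀ t₂ ∈ Set.Icc (0:ℝ) T,
        |t - t₂| ≤ Δ → |P t i - P t₂ i| ≤ δ := by
      intro i
      have huc := isCompact_Icc.uniformContinuousOn_of_continuous (hPc i)
      rw [Metric.uniformContinuousOn_iff] at huc
      obtain ⟨Δ, hΔ, hh⟩ := huc δ hδ
      refine ⟨Δ / 2, by positivity, fun t ht t₂ ht₂ hd => ?_⟩
      have : dist t t₂ < Δ := by
        rw [Real.dist_eq]; linarith [abs_nonneg (t - t₂)]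
      have := hh t ht t₂ ht₂ this
      rw [Real.dist_eq] at this
      linarith
    choose Δf hΔf hf using h
    refine ⟨Finset.univ.inf' hne Δf, ?_, fun t ht t₂ ht₂ hd i => ?_⟩
    · exact (Finset.lt_inf'_iff hne).mpr fun i _ => hΔf i
    · exact hf i t ht t₂ ht₂ (le_trans hd (Finset.inf'_le _ (Finset.mem_univ i)))
  -- PART (a): positivity barrier
  obtain ⟨K, hK1, hKdef⟩ : ∃ K : ℝ, 1 ≤ K ∧ K = Ca + 1 := ⟨Ca + 1, by linarith, rfl⟩
  obtain ⟨w₀, hw₀pos, hw₀def⟩ : ∃ w : ℝ, 0 < w ∧ w = (1/2) * Real.exp (-(K*T)) :=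
    ⟨_, by positivity, rfl⟩
  have hW_lb : ∀ t ∈ Set.Icc (0:ℝ) T, w₀ ≤ (1/2) * Real.exp (-(K*(T - t))) := by
    intro t ht
    have h1 : -(K*T) ≤ -(K*(T-t)) := by nlinarith [ht.1]
    have h2 := Real.exp_le_exp.mpr h1
    rw [hw₀def]
    linarith
  have hW_ub : ∀ t ∈ Set.Icc (0:ℝ) T, (1/2) * Real.exp (-(K*(T - t))) ≤ 1/2 := by
    intro t ht
    have h1 : -(K*(T-t)) ≤ 0 := by nlinarith [ht.2]
    have h2 : Real.exp (-(K*(T-t))) ≤ 1 := Real.exp_le_one_iff.mpr h1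
    linarith
  obtain ⟨δa, hδapos, hδaw, hδaCa⟩ : ∃ δ : ℝ, 0 < δ ∧ δ ≤ w₀ ∧ δ * Ca ≤ w₀ / 4 := by
    refine ⟨min w₀ (w₀/(4*(Ca+1))), lt_min hw₀pos (div_pos hw₀pos (by linarith)),
      min_le_left _ _, ?_⟩
    have h1 : min w₀ (w₀/(4*(Ca+1))) ≤ w₀/(4*(Ca+1)) := min_le_right _ _
    have h2 : min w₀ (w₀/(4*(Ca+1))) * Ca ≤ (w₀/(4*(Ca+1))) * Ca :=
      mul_le_mul_of_nonneg_right h1 hCa0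
    have h3 : (w₀/(4*(Ca+1))) * Ca ≤ w₀/4 := by
      rw [div_mul_eq_mul_div, div_le_div_iff₀ (by linarith : (0:ℝ) < 4*(Ca+1))
        (by norm_num : (0:ℝ) < 4)]
      nlinarith [hw₀pos.le, hCa0]
    linarith
  obtain ⟨Δa, hΔapos, hΔaP⟩ := hUC δa hδapos
  obtain ⟨Δ₀, hΔ₀pos, hΔ₀a, hΔ₀K, hΔ₀C⟩ :
      ∃ Δ : ℝ, 0 < Δ ∧ Δ ≤ Δa ∧ K^2 * Δ ≤ w₀/2 ∧ Δ ≤ 1/(Ca+1) := by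
    refine ⟨min Δa (min (w₀/(2*K^2+1)) (1/(Ca+1))),
      lt_min hΔapos (lt_min (div_pos hw₀pos (by positivity)) (div_pos one_pos (by linarith))),
      min_le_left _ _, ?_, le_trans (min_le_right _ _) (min_le_right _ _)⟩
    have h1 : min Δa (min (w₀/(2*K^2+1)) (1/(Ca+1))) ≤ w₀/(2*K^2+1) :=
      le_trans (min_le_right _ _) (min_le_left _ _)
    have h2 := mul_le_mul_of_nonneg_left h1 (by positivity : (0:ℝ) ≤ K^2)
    have h3 : K^2 * (w₀/(2*K^2+1)) ≤ w₀/2 := by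
      rw [← mul_div_assoc, div_le_div_iff₀ (by positivity) (by norm_num : (0:ℝ) < 2)]
      nlinarith [hw₀pos.le, sq_nonneg K]
    linarith
  have hPos : ∀ t ∈ Set.Icc (0:ℝ) T, ∀ i, (1/2) * Real.exp (-(K*(T - t))) ≤ P t i := by
    have hgT : ∀ i, (1/2) * Real.exp (-(K*(T - T))) ≤ P T i := by
      intro i
      have hTT : T - T = (0:ℝ) := by ring
      rw [hTT]
      simp only [mul_zero, neg_zero, Real.exp_zero, mul_one, hPT i]
      norm_num
    refine aux_backward_induction (T := T) hΔ₀pos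
      (g := fun u => ∀ i, (1/2) * Real.exp (-(K*(T - u))) ≤ P u i) hgT ?_
    intro t t₂ ht ht₂ htle hd hInv i
    have hd0 : 0 ≤ t₂ - t := by linarith
    have hclose : ∀ s ∈ Set.Icc t t₂, ∀ j, |P s j - P t₂ j| ≤ δa := by
      intro s hs j
      refine hΔaP s ⟨le_trans ht.1 hs.1, le_trans hs.2 ht₂.2⟩ t₂ ht₂ ?_ j
      rw [abs_le]
      refine ⟨by linarith [hs.1, hs.2], by linarith [hs.1, hs.2]⟩
    have hWt₂lb := hW_lb t₂ ht₂
    have hWt₂ub := hW_ub t₂ ht₂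
    have hpoint : ∀ s ∈ Set.Icc t t₂,
        P s i * (ρ s i - 2 * r s i) - ∑ j, Q i j * P s j ≤ (P t₂ i + δa) * Ca := by
      intro s hs
      have hsS : s ∈ Set.Icc (0:ℝ) T := ⟨le_trans ht.1 hs.1, le_trans hs.2 ht₂.2⟩
      have hPpos : ∀ j, 0 ≤ P s j := by
        intro j
        have h1 := abs_le.mp (hclose s hs j)
        have h2 := hInv j
        linarith
      have hsum_nonneg : 0 ≤ ∑ j ∈ Finset.univ.erase i, Q i j * P s j :=
        Finset.sum_nonneg fun j hj =>
          mul_nonneg (hQoff i j (Ne.symm (Finset.mem_erase.mp hj).1)) (hPpos j)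
      have hsum_split : ∑ j, Q i j * P s j
          = ∑ j ∈ Finset.univ.erase i, Q i j * P s j + Q i i * P s i :=
        (Finset.sum_erase_add _ _ (Finset.mem_univ i)).symm
      have hPsi_ub : P s i ≤ P t₂ i + δa := by
        have := abs_le.mp (hclose s hs i); linarith
      have haiCa := abs_le.mp (ha_bd s hsS i)
      have h8 : P s i * (ρ s i - 2 * r s i - Q i i) ≤ P s i * Ca :=
        mul_le_mul_of_nonneg_left haiCa.2 (hPpos i)
      have h9 : P s i * Ca ≤ (P t₂ i + δa) * Ca := mul_le_mul_of_nonneg_right hPsi_ub hCa0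
      rw [hsum_split]
      linarith [hsum_nonneg, h8, h9]
    have hint : (∫ s in t..t₂, (P s i * (ρ s i - 2 * r s i) - ∑ j, Q i j * P s j))
        ≤ (t₂ - t) * ((P t₂ i + δa) * Ca) := by
      have := intervalIntegral.integral_mono_on htle (hfII t ht t₂ ht₂ i)
        (intervalIntegrable_const) hpoint
      rwa [intervalIntegral.integral_const, smul_eq_mul] at this
    have hPt : P t i ≥ P t₂ i - (t₂ - t) * ((P t₂ i + δa) * Ca) := by
      have := hsplit t ht t₂ ht₂ i
      linarith
    have hCad : Ca * (t₂ - t) ≤ 1 := by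
      have h1 : t₂ - t ≤ 1/(Ca+1) := le_trans hd hΔ₀C
      have h2 : Ca * (t₂ - t) ≤ Ca * (1/(Ca+1)) := mul_le_mul_of_nonneg_left h1 hCa0
      have h3 : Ca * (1/(Ca+1)) ≤ 1 := by
        rw [mul_one_div, div_le_one (by positivity)]
        linarith
      linarith
    have hxabs : |K * (t₂ - t)| ≤ 1 := by
      rw [abs_of_nonneg (mul_nonneg (by linarith) hd0)]
      have h1 : t₂ - t ≤ 1/(Ca+1) := le_trans hd hΔ₀C
      have h2 : K * (t₂ - t) ≤ K * (1/(Ca+1)) :=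
        mul_le_mul_of_nonneg_left h1 (by linarith)
      have h3 : K * (1/(Ca+1)) = 1 := by
        rw [hKdef, mul_one_div, div_self (by positivity)]
      linarith
    have hexp := aux_exp_neg_le hxabs
    have hWsplit : (1/2) * Real.exp (-(K*(T - t)))
        = ((1/2) * Real.exp (-(K*(T - t₂)))) * Real.exp (-(K * (t₂ - t))) := by
      rw [mul_assoc, ← Real.exp_add]
      ring_nf
    rw [hWsplit]
    have hKd : K^2 * (t₂ - t) ≤ w₀ / 2 := by
      have := mul_le_mul_of_nonneg_left hd (by positivity : (0:ℝ) ≤ K^2)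
      linarith [hΔ₀K]
    have hInvi := hInv i
    calc ((1/2) * Real.exp (-(K*(T - t₂)))) * Real.exp (-(K * (t₂ - t)))
        ≤ ((1/2) * Real.exp (-(K*(T - t₂)))) * (1 - K*(t₂-t) + (K*(t₂-t))^2) :=
          mul_le_mul_of_nonneg_left hexp (by positivity)
      _ ≤ P t₂ i - (t₂ - t) * ((P t₂ i + δa) * Ca) :=
          aux_parta_ineq hKdef hInvi hWt₂lb hWt₂ub hw₀pos.le hd0 hCad hKd hδaCa hδapos.le hCa0
      _ ≤ P t i := by linarith [hPt]
  have hPos' : ∀ t ∈ Set.Icc (0:ℝ) T, ∀ i, 0 ≤ P t i := fun t ht i =>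
    le_trans (by positivity) (hPos t ht i)
  -- PART (b): lower bound
  have hXbd : ∀ i, ∀ u ∈ Set.Icc (0:ℝ) T, ∀ u₂ ∈ Set.Icc (0:ℝ) T, u ≤ u₂ →
      |∫ s in u..u₂, (ρ s i - 2 * r s i - Q i i)| ≤ Ca * (u₂ - u) := by
    intro i u hu u₂ hu₂ hle
    have h := intervalIntegral.norm_integral_le_of_norm_le_const
      (C := Ca) (f := fun s => ρ s i - 2 * r s i - Q i i) (a := u) (b := u₂) ?_
    · rw [Real.norm_eq_abs, abs_of_nonneg (by linarith : (0:ℝ) ≤ u₂ - u)] at h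
      exact h
    · intro x hx
      rw [Set.uIoc_of_le hle] at hx
      exact ha_bd x ⟨by linarith [hu.1, hx.1.le], le_trans hx.2 hu₂.2⟩ i
  have hAbd : ∀ i, ∀ u ∈ Set.Icc (0:ℝ) T,
      |∫ s in u..T, (ρ s i - 2 * r s i - Q i i)| ≤ Ca * T := by
    intro i u hu
    have h := hXbd i u hu T hTS hu.2
    have h2 : Ca * (T - u) ≤ Ca * T := by nlinarith [hu.1]
    linarith
  have hLower : ∀ t ∈ Set.Icc (0:ℝ) T, ∀ i,
      Real.exp (-∫ s in t..T, (ρ s i - 2 * r s i - Q i i)) ≤ P t i := by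
    intro t ht i
    have hεb : ∀ ε : ℝ, 0 < ε →
        Real.exp (-(∫ s in t..T, (ρ s i - 2 * r s i - Q i i)) - ε * (T - t)) ≤ P t i := by
      intro ε hε
      obtain ⟨wb, hwbpos, hwbdef⟩ : ∃ w : ℝ, 0 < w ∧ w = Real.exp (-(Ca*T) - ε*T) :=
        ⟨_, Real.exp_pos _, rfl⟩
      obtain ⟨WB, hWBpos, hWBdef⟩ : ∃ w : ℝ, 0 < w ∧ w = Real.exp (Ca*T) :=
        ⟨_, Real.exp_pos _, rfl⟩
      obtain ⟨δb, hδbpos, hδbCa⟩ : ∃ δ : ℝ, 0 < δ ∧ δ * Ca ≤ wb * ε / 2 := by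
        refine ⟨wb*ε/(2*(Ca+1)), by positivity, ?_⟩
        rw [div_mul_eq_mul_div, div_le_div_iff₀ (by linarith : (0:ℝ) < 2*(Ca+1))
          (by norm_num : (0:ℝ) < 2)]
        nlinarith [mul_pos hwbpos hε, hCa0]
      obtain ⟨Δb, hΔbpos, hΔbP⟩ := hUC δb hδbpos
      have hWB0 : (0:ℝ) ≤ WB * (Ca+ε)^2 := mul_nonneg hWBpos.le (sq_nonneg _)
      obtain ⟨Δ₁, hΔ₁pos, hΔ₁b, hΔ₁x, hΔ₁C⟩ :
          ∃ Δ : ℝ, 0 < Δ ∧ Δ ≤ Δb ∧ WB * ((Ca+ε)^2 * Δ) ≤ wb * ε / 2 ∧ (Ca+ε) * Δ ≤ 1 := by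
        have hden : (0:ℝ) < 2*(WB*(Ca+ε)^2)+1 := by linarith
        refine ⟨min Δb (min (wb*ε/(2*(WB*(Ca+ε)^2)+1)) (1/(Ca+ε))),
          lt_min hΔbpos (lt_min (div_pos (mul_pos hwbpos hε) hden)
            (div_pos one_pos (by linarith))), min_le_left _ _, ?_, ?_⟩
        · have h1 : min Δb (min (wb*ε/(2*(WB*(Ca+ε)^2)+1)) (1/(Ca+ε)))
              ≤ wb*ε/(2*(WB*(Ca+ε)^2)+1) := le_trans (min_le_right _ _) (min_le_left _ _)
          have h2 := mul_le_mul_of_nonneg_left h1 hWB0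
          have h3 : (WB*(Ca+ε)^2) * (wb*ε/(2*(WB*(Ca+ε)^2)+1)) ≤ wb * ε / 2 := by
            rw [← mul_div_assoc, div_le_div_iff₀ hden (by norm_num : (0:ℝ) < 2)]
            nlinarith [mul_pos hwbpos hε, hWB0]
          calc WB * ((Ca+ε)^2 * (min Δb (min (wb*ε/(2*(WB*(Ca+ε)^2)+1)) (1/(Ca+ε)))))
              = (WB*(Ca+ε)^2) * (min Δb (min (wb*ε/(2*(WB*(Ca+ε)^2)+1)) (1/(Ca+ε)))) := by ring
            _ ≤ (WB*(Ca+ε)^2) * (wb*ε/(2*(WB*(Ca+ε)^2)+1)) := h2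
            _ ≤ wb * ε / 2 := h3
        · have h1 : min Δb (min (wb*ε/(2*(WB*(Ca+ε)^2)+1)) (1/(Ca+ε)))
              ≤ 1/(Ca+ε) := le_trans (min_le_right _ _) (min_le_right _ _)
          have h2 := mul_le_mul_of_nonneg_left h1 (by linarith : (0:ℝ) ≤ Ca+ε)
          have h3 : (Ca+ε) * (1/(Ca+ε)) = 1 := by
            rw [mul_one_div, div_self (by linarith : Ca+ε ≠ 0)]
          linarith
      have hWb_lb : ∀ u ∈ Set.Icc (0:ℝ) T,
          wb ≤ Real.exp (-(∫ s in u..T, (ρ s i - 2 * r s i - Q i i)) - ε*(T-u)) := by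
        intro u hu
        rw [hwbdef]
        apply Real.exp_le_exp.mpr
        have h := abs_le.mp (hAbd i u hu)
        have h2 : ε*(T-u) ≤ ε*T := by nlinarith [hu.1]
        linarith
      have hWb_ub : ∀ u ∈ Set.Icc (0:ℝ) T,
          Real.exp (-(∫ s in u..T, (ρ s i - 2 * r s i - Q i i)) - ε*(T-u)) ≤ WB := by
        intro u hu
        rw [hWBdef]
        apply Real.exp_le_exp.mpr
        have h := abs_le.mp (hAbd i u hu)
        have h2 : 0 ≤ ε*(T-u) := mul_nonneg hε.le (by linarith [hu.2])
        linarith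
      have key : ∀ u ∈ Set.Icc (0:ℝ) T,
          Real.exp (-(∫ s in u..T, (ρ s i - 2 * r s i - Q i i)) - ε*(T - u)) ≤ P u i := by
        refine aux_backward_induction (T := T) hΔ₁pos
          (g := fun u => Real.exp (-(∫ s in u..T, (ρ s i - 2 * r s i - Q i i)) - ε*(T - u))
            ≤ P u i) ?_ ?_
        · show Real.exp (-(∫ s in T..T, (ρ s i - 2 * r s i - Q i i)) - ε*(T - T)) ≤ P T i
          rw [intervalIntegral.integral_same, hPT i]
          have h : (-(0:ℝ) - ε*(T-T)) = 0 := by ring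
          rw [h, Real.exp_zero]
        · intro u u₂ hu hu₂ hule hud hInv
          show Real.exp (-(∫ s in u..T, (ρ s i - 2 * r s i - Q i i)) - ε*(T - u)) ≤ P u i
          replace hInv : Real.exp (-(∫ s in u₂..T, (ρ s i - 2 * r s i - Q i i))
            - ε*(T - u₂)) ≤ P u₂ i := hInv
          have hd0 : 0 ≤ u₂ - u := by linarith
          have hXsp := (intervalIntegral.integral_add_adjacent_intervals
            (haII u hu u₂ hu₂ i) (haII u₂ hu₂ T hTS i)).symm
          have hXa' := abs_le.mp (hXbd i u hu u₂ hu₂ hule)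
          have hCad1 : (Ca+ε)*(u₂-u) ≤ 1 :=
            le_trans (mul_le_mul_of_nonneg_left hud (by linarith)) hΔ₁C
          have hclose : ∀ s ∈ Set.Icc u u₂, |P s i - P u₂ i| ≤ δb := by
            intro s hs
            refine hΔbP s ⟨le_trans hu.1 hs.1, le_trans hs.2 hu₂.2⟩ u₂ hu₂ ?_ i
            rw [abs_le]
            exact ⟨by linarith [hs.1, hs.2, hΔ₁b], by linarith [hs.1, hs.2, hΔ₁b]⟩
          have hpoint : ∀ s ∈ Set.Icc u u₂,
              P s i * (ρ s i - 2 * r s i) - ∑ j, Q i j * P s j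
                ≤ P u₂ i * (ρ s i - 2 * r s i - Q i i) + δb * Ca := by
            intro s hs
            have hsS : s ∈ Set.Icc (0:ℝ) T := ⟨le_trans hu.1 hs.1, le_trans hs.2 hu₂.2⟩
            have hsum_nonneg : 0 ≤ ∑ j ∈ Finset.univ.erase i, Q i j * P s j :=
              Finset.sum_nonneg fun j hj =>
                mul_nonneg (hQoff i j (Ne.symm (Finset.mem_erase.mp hj).1)) (hPos' s hsS j)
            have hsum_split : (∑ j, Q i j * P s j)
                = ∑ j ∈ Finset.univ.erase i, Q i j * P s j + Q i i * P s i :=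
              (Finset.sum_erase_add _ _ (Finset.mem_univ i)).symm
            have h2 : |(P s i - P u₂ i) * (ρ s i - 2 * r s i - Q i i)| ≤ δb * Ca := by
              rw [abs_mul]
              exact mul_le_mul (hclose s hs) (ha_bd s hsS i) (abs_nonneg _) hδbpos.le
            have h3 := (abs_le.mp h2).2
            rw [hsum_split]
            linarith [hsum_nonneg, h3]
          have hint : (∫ s in u..u₂, (P s i * (ρ s i - 2 * r s i) - ∑ j, Q i j * P s j))
              ≤ P u₂ i * (∫ s in u..u₂, (ρ s i - 2 * r s i - Q i i))
                + (u₂ - u) * (δb * Ca) := by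
            have h := intervalIntegral.integral_mono_on hule (hfII u hu u₂ hu₂ i)
              (((haII u hu u₂ hu₂ i).const_mul (P u₂ i)).add intervalIntegrable_const) hpoint
            rwa [intervalIntegral.integral_add ((haII u hu u₂ hu₂ i).const_mul (P u₂ i))
              intervalIntegrable_const, intervalIntegral.integral_const_mul,
              intervalIntegral.integral_const, smul_eq_mul] at h
          have hPt : P u i ≥ P u₂ i - P u₂ i * (∫ s in u..u₂, (ρ s i - 2 * r s i - Q i i))
              - (u₂ - u) * (δb * Ca) := by
            have := hsplit u hu u₂ hu₂ i
            linarith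
          have hWsplit : Real.exp (-(∫ s in u..T, (ρ s i - 2 * r s i - Q i i)) - ε*(T-u))
              = Real.exp (-(∫ s in u₂..T, (ρ s i - 2 * r s i - Q i i)) - ε*(T-u₂))
                * Real.exp (-((∫ s in u..u₂, (ρ s i - 2 * r s i - Q i i)) + ε*(u₂-u))) := by
            rw [← Real.exp_add]
            congr 1
            rw [hXsp]
            ring
          have hxabs : |(∫ s in u..u₂, (ρ s i - 2 * r s i - Q i i)) + ε*(u₂-u)| ≤ 1 := by
            have hεd : 0 ≤ ε*(u₂-u) := mul_nonneg hε.le hd0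
            rw [abs_le]
            constructor
            · nlinarith [hXa'.1, hεd, hCad1]
            · nlinarith [hXa'.2, hεd, hCad1]
          have hexp := aux_exp_neg_le hxabs
          have hWlb₂ := hWb_lb u₂ hu₂
          have hWub₂ := hWb_ub u₂ hu₂
          rw [hWsplit]
          have hsqd : WB * ((Ca+ε)^2 * (u₂-u)) ≤ wb * ε / 2 := by
            have := mul_le_mul_of_nonneg_left
              (mul_le_mul_of_nonneg_left hud (sq_nonneg (Ca+ε))) hWBpos.le
            linarith [hΔ₁x]
          calc Real.exp (-(∫ s in u₂..T, (ρ s i - 2 * r s i - Q i i)) - ε*(T-u₂))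
                * Real.exp (-((∫ s in u..u₂, (ρ s i - 2 * r s i - Q i i)) + ε*(u₂-u)))
              ≤ Real.exp (-(∫ s in u₂..T, (ρ s i - 2 * r s i - Q i i)) - ε*(T-u₂))
                * (1 - ((∫ s in u..u₂, (ρ s i - 2 * r s i - Q i i)) + ε*(u₂-u))
                  + ((∫ s in u..u₂, (ρ s i - 2 * r s i - Q i i)) + ε*(u₂-u))^2) :=
                mul_le_mul_of_nonneg_left hexp (Real.exp_pos _).le
            _ ≤ P u₂ i - P u₂ i * (∫ s in u..u₂, (ρ s i - 2 * r s i - Q i i))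
                - (u₂ - u) * (δb * Ca) :=
                aux_partb_ineq hInv hWlb₂ hWub₂ hwbpos hε hd0 hXa'.1 hXa'.2 hCa0 hCad1
                  hsqd hδbCa hδbpos.le
            _ ≤ P u i := hPt
      exact key t ht
    have hc : Continuous (fun e : ℝ =>
        Real.exp (-(∫ s in t..T, (ρ s i - 2 * r s i - Q i i)) - e * (T - t))) := by
      fun_prop
    have h0 : Tendsto (fun e : ℝ =>
        Real.exp (-(∫ s in t..T, (ρ s i - 2 * r s i - Q i i)) - e * (T - t))) (𝓝 0)
        (𝓝 (Real.exp (-(∫ s in t..T, (ρ s i - 2 * r s i - Q i i))))) := by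
      simpa using hc.tendsto 0
    refine le_of_tendsto (h0.mono_left (nhdsWithin_le_nhds : 𝓝[>] (0:ℝ) ≤ 𝓝 0)) ?_
    filter_upwards [self_mem_nhdsWithin] with ε hε
    exact hεb ε hε
  refine ⟨fun t ht i => ⟨hLower t ht i, Real.exp_pos _⟩, ?_⟩
  intro hρpos
  -- PART (c): upper bound
  obtain ⟨R, hR0, hRub, hRdef⟩ : ∃ R : ℝ, 0 ≤ R ∧
      (∀ s ∈ Set.Icc (0:ℝ) T, ∀ i, |r s i| ≤ R) ∧ R = supAbsOn T r := by
    have hub : ∀ s ∈ Set.Icc (0:ℝ) T, ∀ i, |r s i| ≤ supAbsOn T r := by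
      intro s hs i
      apply le_csSup
      · refine ⟨Cr, ?_⟩
        rintro x ⟨u, hu, j, rfl⟩
        exact hCr u hu j
      · exact ⟨s, hs, i, rfl⟩
    exact ⟨supAbsOn T r, le_trans (abs_nonneg _) (hub 0 h0S i₀), hub, rfl⟩
  have hupper : ∀ ε : ℝ, 0 < ε → ∀ t ∈ Set.Icc (0:ℝ) T, ∀ i,
      P t i ≤ Real.exp ((2 * R + ε) * (T - t)) := by
    intro ε hε
    obtain ⟨δc, hδcpos, hδcb⟩ : ∃ δ : ℝ, 0 < δ ∧ δ * (2 * R + 2 * CQ) ≤ ε := by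
      refine ⟨ε/(2*R + 2*CQ + 1), div_pos hε (by linarith), ?_⟩
      rw [div_mul_eq_mul_div, div_le_iff₀ (by linarith : (0:ℝ) < 2*R + 2*CQ + 1)]
      nlinarith [hε.le, hR0, hCQ0]
    obtain ⟨Δc, hΔcpos, hΔcP⟩ := hUC δc hδcpos
    have key : ∀ t ∈ Set.Icc (0:ℝ) T,
        ∀ i, P t i ≤ Real.exp ((2 * R + ε) * (T - t)) := by
      refine aux_backward_induction (T := T) hΔcpos
        (g := fun t => ∀ i, P t i ≤ Real.exp ((2 * R + ε) * (T - t))) ?_ ?_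
      · intro i
        rw [hPT i]
        have h : (2 * R + ε) * (T - T) = 0 := by ring
        rw [h, Real.exp_zero]
      · intro t t₂ ht ht₂ htle hd hInv i
        obtain ⟨i', hi'max⟩ : ∃ i', ∀ j, P t j ≤ P t i' := by
          obtain ⟨i', _, hmax⟩ := Finset.exists_mem_eq_sup' hne (fun j => P t j)
          exact ⟨i', fun j => hmax ▸ Finset.le_sup' (fun j => P t j) (Finset.mem_univ j)⟩
        refine le_trans (hi'max i) ?_
        have hd0 : 0 ≤ t₂ - t := by linarith
        have hclose : ∀ s ∈ Set.Icc t t₂, ∀ j,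
            |P s j - P t₂ j| ≤ δc ∧ |P s j - P t j| ≤ δc := by
          intro s hs j
          have hsS : s ∈ Set.Icc (0:ℝ) T := ⟨le_trans ht.1 hs.1, le_trans hs.2 ht₂.2⟩
          constructor
          · refine hΔcP s hsS t₂ ht₂ ?_ j
            rw [abs_le]
            exact ⟨by linarith [hs.1, hs.2], by linarith [hs.1, hs.2]⟩
          · refine hΔcP s hsS t ht ?_ j
            rw [abs_le]
            exact ⟨by linarith [hs.1, hs.2], by linarith [hs.1, hs.2]⟩
        have hpoint : ∀ s ∈ Set.Icc t t₂,
            -(2*R*(P t₂ i' + δc) + 2*δc*CQ)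
              ≤ P s i' * (ρ s i' - 2 * r s i') - ∑ j, Q i' j * P s j := by
          intro s hs
          have hsS : s ∈ Set.Icc (0:ℝ) T := ⟨le_trans ht.1 hs.1, le_trans hs.2 ht₂.2⟩
          have hQterm : (∑ j, Q i' j * P s j) ≤ 2*δc*CQ := by
            have e1 : (∑ j, Q i' j * P s j) = ∑ j, Q i' j * (P s j - P s i') := by
              have e2 : (∑ j, Q i' j * (P s j - P s i'))
                  = (∑ j, Q i' j * P s j) - (∑ j, Q i' j) * P s i' := by
                rw [Finset.sum_mul, ← Finset.sum_sub_distrib]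
                exact Finset.sum_congr rfl fun j _ => by ring
              rw [e2, hQrow i', zero_mul, sub_zero]
            have e3 : (∑ j, Q i' j * (P s j - P s i'))
                = ∑ j ∈ Finset.univ.erase i', Q i' j * (P s j - P s i') := by
              rw [← Finset.sum_erase_add _ _ (Finset.mem_univ i')]
              simp
            have hterm : ∀ j ∈ Finset.univ.erase i',
                Q i' j * (P s j - P s i') ≤ Q i' j * (2*δc) := by
              intro j hj
              apply mul_le_mul_of_nonneg_left ?_
                (hQoff i' j (Ne.symm (Finset.mem_erase.mp hj).1))
              have a1 := abs_le.mp (hclose s hs j).2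
              have a2 := abs_le.mp (hclose s hs i').2
              have a3 := hi'max j
              linarith
            calc (∑ j, Q i' j * P s j)
                = ∑ j ∈ Finset.univ.erase i', Q i' j * (P s j - P s i') := by
                  rw [e1, e3]
              _ ≤ ∑ j ∈ Finset.univ.erase i', Q i' j * (2*δc) := Finset.sum_le_sum hterm
              _ = (∑ j ∈ Finset.univ.erase i', Q i' j) * (2*δc) := by rw [Finset.sum_mul]
              _ = (-Q i' i') * (2*δc) := by rw [hQerase i']
              _ ≤ CQ * (2*δc) := mul_le_mul_of_nonneg_right (hCQ i') (by linarith)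
              _ = 2*δc*CQ := by ring
          have hP0 : 0 ≤ P s i' := hPos' s hsS i'
          have hρ0 : 0 ≤ P s i' * ρ s i' := mul_nonneg hP0 (hρpos s hsS i')
          have hrR := abs_le.mp (hRub s hsS i')
          have h5 : P s i' * (2 * r s i') ≤ P s i' * (2*R) :=
            mul_le_mul_of_nonneg_left (by linarith) hP0
          have h6 : P s i' ≤ P t₂ i' + δc := by
            have := abs_le.mp (hclose s hs i').1
            linarith
          have h7 : P s i' * (2*R) ≤ (P t₂ i' + δc) * (2*R) :=
            mul_le_mul_of_nonneg_right h6 (by linarith)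
          nlinarith [hρ0, h5, h7, hQterm]
        have hintc : (t₂ - t) * (-(2*R*(P t₂ i' + δc) + 2*δc*CQ))
            ≤ ∫ s in t..t₂, (P s i' * (ρ s i' - 2 * r s i') - ∑ j, Q i' j * P s j) := by
          have h := intervalIntegral.integral_mono_on htle intervalIntegrable_const
            (hfII t ht t₂ ht₂ i') hpoint
          rwa [intervalIntegral.integral_const, smul_eq_mul] at h
        have hPt : P t i' ≤ P t₂ i' + (t₂ - t) * (2*R*(P t₂ i' + δc) + 2*δc*CQ) := by
          have := hsplit t ht t₂ ht₂ i'
          linarith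
        have hVsplit : Real.exp ((2*R+ε)*(T-t))
            = Real.exp ((2*R+ε)*(T-t₂)) * Real.exp ((2*R+ε)*(t₂-t)) := by
          rw [← Real.exp_add]
          ring_nf
        have hexp : 1 + (2*R+ε)*(t₂-t) ≤ Real.exp ((2*R+ε)*(t₂-t)) := by
          linarith [Real.add_one_le_exp ((2*R+ε)*(t₂-t))]
        have hV₂1 : 1 ≤ Real.exp ((2*R+ε)*(T-t₂)) := by
          have h1 := Real.add_one_le_exp ((2*R+ε)*(T-t₂))
          have h2 : 0 ≤ (2*R+ε)*(T-t₂) :=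
            mul_nonneg (by linarith) (by linarith [ht₂.2])
          linarith
        have hInv' := hInv i'
        rw [hVsplit]
        calc P t i' ≤ P t₂ i' + (t₂ - t) * (2*R*(P t₂ i' + δc) + 2*δc*CQ) := hPt
          _ ≤ Real.exp ((2*R+ε)*(T-t₂)) * (1 + (2*R+ε)*(t₂-t)) :=
              aux_partc_ineq hInv' hV₂1 hd0 hR0 hδcpos.le hCQ0 hδcb
          _ ≤ Real.exp ((2*R+ε)*(T-t₂)) * Real.exp ((2*R+ε)*(t₂-t)) :=
              mul_le_mul_of_nonneg_left hexp (Real.exp_pos _).le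
    exact key
  have hUforall : ∀ t ∈ Set.Icc (0:ℝ) T, ∀ i, P t i ≤ Real.exp (2*R*(T - t)) := by
    intro t ht i
    have hc : Continuous fun e : ℝ => Real.exp ((2*R + e)*(T - t)) := by fun_prop
    have h0 : Tendsto (fun e : ℝ => Real.exp ((2*R + e)*(T - t))) (𝓝 0)
        (𝓝 (Real.exp (2*R*(T - t)))) := by
      simpa using hc.tendsto 0
    refine ge_of_tendsto (h0.mono_left (nhdsWithin_le_nhds : 𝓝[>] (0:ℝ) ≤ 𝓝 0)) ?_
    filter_upwards [self_mem_nhdsWithin] with ε hε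
    exact hupper ε hε t ht i
  intro t ht i
  rw [← hRdef]
  refine ⟨hUforall t ht i, lt_of_lt_of_le (Real.exp_pos _) (hLower t ht i), ?_⟩
  refine le_trans (hUforall t ht i) (Real.exp_le_exp.mpr ?_)
  nlinarith [hR0, ht.1]
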